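/- Let μ be the probability measure on [0,1]^d with density c (the extended FGM copula density with parameters λ^(k)_M satisfying the admissibility constraint), and let (U₁,…,U_d) ∼ μ. Then for every z ∈ {1,2} and every P ⊆ {1,…,d} with |P| ≥ 2, E[∏_{s ∈ P} φ_z(U_s)] = λ^(z)_P. -/

import Mathlib

open MeasureTheory ProbabilityTheory Real Finset

/-- The shifted Legendre-type functions: `φ₁(x) = √3 (2x − 1)` and
`φ₂(x) = √5 (6x² − 6x + 1)`. -/
noncomputable def phiFGM (k : ℕ) (x : ℝ) : ℝ :=
  if k = 1 then Real.sqrt 3 * (2 * x - 1) else Real.sqrt 5 * (6 * x ^ 2 - 6 * x + 1)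

/-- Antiderivatives: `Φ₁(x) = √3 (x² − x)` and `Φ₂(x) = √5 (2x³ − 3x² + x)`. -/
noncomputable def PhiFGM (k : ℕ) (x : ℝ) : ℝ :=
  if k = 1 then Real.sqrt 3 * (x ^ 2 - x) else Real.sqrt 5 * (2 * x ^ 3 - 3 * x ^ 2 + x)

/-- The density of the extended `d`-variate FGM copula with parameters `lam k M`:
`c(u) = 1 + ∑_{k=1}^2 ∑_{M ⊆ {1,…,d}, |M| ≥ 2} λ^(k)_M ∏_{m ∈ M} φ_k(u_m)`. -/
noncomputable def fgmDensity (d : ℕ) (lam : ℕ → Finset (Fin d) → ℝ) (u : Fin d → ℝ) : ℝ :=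
  1 + ∑ k ∈ Finset.Icc 1 2, ∑ M ∈ Finset.univ.powerset.filter (fun M : Finset (Fin d) => 2 ≤ M.card),
      lam k M * ∏ m ∈ M, phiFGM k (u m)

/-- The admissibility constraint
`∑_{j=2}^d [ (√3)^j ∑_{|M|=j} |λ^(1)_M| + (√5)^j ∑_{|M|=j} |λ^(2)_M| ] ≤ 1`. -/
def fgmAdmissible (d : ℕ) (lam : ℕ → Finset (Fin d) → ℝ) : Prop :=
  ∑ M ∈ Finset.univ.powerset.filter (fun M : Finset (Fin d) => 2 ≤ M.card),
      (Real.sqrt 3 ^ M.card * |lam 1 M| + Real.sqrt 5 ^ M.card * |lam 2 M|) ≤ 1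

/-- The probability measure on `[0,1]^d` with density `c`: the uniform measure on the
unit cube reweighted by the extended FGM copula density. -/
noncomputable def fgmMeasure (d : ℕ) (lam : ℕ → Finset (Fin d) → ℝ) :
    Measure (Fin d → ℝ) :=
  (Measure.pi fun _ : Fin d => volume.restrict (Set.Icc (0:ℝ) 1)).withDensity
    fun u => ENNReal.ofReal (fgmDensity d lam u)

/-! ### Auxiliary lemmas -/

/-- Fubini for a finite product of sigma-finite measures on `ℝ`. -/
theorem FGMaux.pi_integral {n : ℕ} (μ : Fin n → Measure ℝ) [∀ i, SigmaFinite (μ i)]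
    (f : Fin n → ℝ → ℝ) :
    ∫ x, ∏ i, f i (x i) ∂(Measure.pi μ) = ∏ i, ∫ x, f i x ∂(μ i) := by
  induction n with
  | zero => simp [Measure.real, Measure.pi_of_empty]
  | succ n ih =>
      calc
        _ = ∫ p : ℝ × (Fin n → ℝ), f 0 p.1 * ∏ i : Fin n, f i.succ (p.2 i)
              ∂((μ 0).prod (Measure.pi fun i => μ i.succ)) := by
          rw [← ((measurePreserving_piFinSuccAbove μ 0).symm).integral_comp']
          simp_rw [MeasurableEquiv.piFinSuccAbove_symm_apply, Fin.insertNthEquiv,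
            Fin.prod_univ_succ, Fin.insertNth_zero, Equiv.coe_fn_mk, Fin.cons_succ,
            Fin.zero_succAbove, cast_eq, Fin.cons_zero]
        _ = (∫ x, f 0 x ∂μ 0) * ∏ i : Fin n, ∫ x, f i.succ x ∂μ i.succ := by
          rw [← ih, ← integral_prod_mul]
        _ = _ := by rw [Fin.prod_univ_succ]

noncomputable abbrev FGMaux.mu0 : Measure ℝ := volume.restrict (Set.Icc (0:ℝ) 1)

namespace FGMaux

lemma poly_int (a b c e f : ℝ) :
    ∫ x in (0:ℝ)..1, (a*x^4 + b*x^3 + c*x^2 + e*x + f) = a/5 + b/4 + c/3 + e/2 + f := by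
  have h : ∀ x ∈ Set.uIcc (0:ℝ) 1,
      HasDerivAt (fun y => a*y^5/5 + b*y^4/4 + c*y^3/3 + e*y^2/2 + f*y)
        (a*x^4 + b*x^3 + c*x^2 + e*x + f) x := by
    intro x _
    have h5 := (((hasDerivAt_pow 5 x).const_mul a).div_const 5)
    have h4 := (((hasDerivAt_pow 4 x).const_mul b).div_const 4)
    have h3 := (((hasDerivAt_pow 3 x).const_mul c).div_const 3)
    have h2 := (((hasDerivAt_pow 2 x).const_mul e).div_const 2)
    have h1 := (hasDerivAt_id x).const_mul f
    exact ((((h5.add h4).add h3).add h2).add h1).congr_deriv (by push_cast; ring)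
  rw [intervalIntegral.integral_eq_sub_of_hasDerivAt h
    ((by fun_prop : Continuous fun x:ℝ => a*x^4 + b*x^3 + c*x^2 + e*x + f).intervalIntegrable _ _)]
  norm_num

lemma to_interval (g : ℝ → ℝ) : ∫ x, g x ∂mu0 = ∫ x in (0:ℝ)..1, g x := by
  rw [intervalIntegral.integral_of_le zero_le_one, ← integral_Icc_eq_integral_Ioc]

lemma sqrt3_sq : Real.sqrt 3 * Real.sqrt 3 = 3 := Real.mul_self_sqrt (by norm_num)
lemma sqrt5_sq : Real.sqrt 5 * Real.sqrt 5 = 5 := Real.mul_self_sqrt (by norm_num)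

lemma I_one (k : ℕ) : ∫ x, phiFGM k x ∂mu0 = 0 := by
  rw [to_interval]
  unfold phiFGM
  by_cases hk : k = 1 <;> simp only [hk, if_true, if_false, if_pos, if_neg, reduceIte]
  · rw [show (fun x:ℝ => Real.sqrt 3 * (2*x-1))
        = fun x => 0*x^4 + 0*x^3 + 0*x^2 + (2*Real.sqrt 3)*x + (-Real.sqrt 3) from
      by funext x; ring, poly_int]
    ring
  · rw [show (fun x:ℝ => Real.sqrt 5 * (6*x^2-6*x+1))
        = fun x => 0*x^4 + 0*x^3 + (6*Real.sqrt 5)*x^2 + (-(6*Real.sqrt 5))*x + Real.sqrt 5 from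
      by funext x; ring, poly_int]
    ring

lemma I_mul (k l : ℕ) : ∫ x, phiFGM k x * phiFGM l x ∂mu0 = if (k = 1 ↔ l = 1) then 1 else 0 := by
  rw [to_interval]
  unfold phiFGM
  by_cases hk : k = 1 <;> by_cases hl : l = 1 <;>
    simp only [hk, hl, if_true, if_false, reduceIte, iff_true, iff_false, not_true, not_false_iff]
  · rw [show (fun x:ℝ => (Real.sqrt 3 * (2*x-1)) * (Real.sqrt 3 * (2*x-1)))
        = fun x => 0*x^4 + 0*x^3 + 12*x^2 + (-12)*x + 3 from
      by funext x; linear_combination (4*x^2 - 4*x + 1) * sqrt3_sq, poly_int]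
    norm_num
  · rw [show (fun x:ℝ => (Real.sqrt 3 * (2*x-1)) * (Real.sqrt 5 * (6*x^2-6*x+1)))
        = fun x => 0*x^4 + (12*(Real.sqrt 3 * Real.sqrt 5))*x^3
            + (-(18*(Real.sqrt 3 * Real.sqrt 5)))*x^2 + (8*(Real.sqrt 3 * Real.sqrt 5))*x
            + (-(Real.sqrt 3 * Real.sqrt 5)) from by funext x; ring, poly_int]
    ring
  · rw [show (fun x:ℝ => (Real.sqrt 5 * (6*x^2-6*x+1)) * (Real.sqrt 3 * (2*x-1)))
        = fun x => 0*x^4 + (12*(Real.sqrt 3 * Real.sqrt 5))*x^3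
            + (-(18*(Real.sqrt 3 * Real.sqrt 5)))*x^2 + (8*(Real.sqrt 3 * Real.sqrt 5))*x
            + (-(Real.sqrt 3 * Real.sqrt 5)) from by funext x; ring, poly_int]
    ring
  · rw [show (fun x:ℝ => (Real.sqrt 5 * (6*x^2-6*x+1)) * (Real.sqrt 5 * (6*x^2-6*x+1)))
        = fun x => 180*x^4 + (-360)*x^3 + 240*x^2 + (-60)*x + 5 from
      by funext x; linear_combination (36*x^4 - 72*x^3 + 48*x^2 - 12*x + 1) * sqrt5_sq, poly_int]
    norm_num

lemma phi_cont (k : ℕ) : Continuous (phiFGM k) := by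
  unfold phiFGM; split <;> fun_prop

lemma phi_bound (k : ℕ) {x : ℝ} (hx : x ∈ Set.Icc (0:ℝ) 1) :
    |phiFGM k x| ≤ if k = 1 then Real.sqrt 3 else Real.sqrt 5 := by
  obtain ⟨h0, h1⟩ := hx
  unfold phiFGM
  have s3 : (0:ℝ) ≤ Real.sqrt 3 := Real.sqrt_nonneg 3
  have s5 : (0:ℝ) ≤ Real.sqrt 5 := Real.sqrt_nonneg 5
  split
  · rw [abs_mul, abs_of_nonneg s3]
    nlinarith [abs_le.2 (⟨by linarith, by linarith⟩ : -1 ≤ 2*x-1 ∧ 2*x-1 ≤ 1)]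
  · rw [abs_mul, abs_of_nonneg s5]
    have : |6*x^2 - 6*x + 1| ≤ 1 := abs_le.2 ⟨by nlinarith, by nlinarith⟩
    nlinarith

lemma phi_bound' (k : ℕ) {x : ℝ} (hx : x ∈ Set.Icc (0:ℝ) 1) :
    |phiFGM k x| ≤ Real.sqrt 3 + Real.sqrt 5 := by
  have h := phi_bound k hx
  have s3 : (0:ℝ) ≤ Real.sqrt 3 := Real.sqrt_nonneg 3
  have s5 : (0:ℝ) ≤ Real.sqrt 5 := Real.sqrt_nonneg 5
  split at h <;> linarith

instance : IsProbabilityMeasure mu0 :=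
  ⟨by rw [Measure.restrict_apply_univ, Real.volume_Icc]; norm_num⟩

noncomputable abbrev piM (d : ℕ) : Measure (Fin d → ℝ) := Measure.pi fun _ : Fin d => mu0

lemma ae_cube (d : ℕ) : ∀ᵐ u ∂(piM d), ∀ i, u i ∈ Set.Icc (0:ℝ) 1 := by
  have hS : MeasurableSet (Set.pi Set.univ fun _ : Fin d => Set.Icc (0:ℝ) 1) :=
    MeasurableSet.univ_pi fun _ => measurableSet_Icc
  have h0 : (piM d) (Set.pi Set.univ fun _ : Fin d => Set.Icc (0:ℝ) 1)ᶜ = 0 := by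
    rw [measure_compl hS (measure_ne_top _ _), Measure.pi_pi]
    simp [Measure.restrict_apply, Real.volume_Icc]
  rw [ae_iff]
  have hset : {u : Fin d → ℝ | ¬∀ i, u i ∈ Set.Icc (0:ℝ) 1}
      = (Set.pi Set.univ fun _ : Fin d => Set.Icc (0:ℝ) 1)ᶜ := by
    ext u
    simp only [Set.mem_setOf_eq, Set.mem_compl_iff, Set.mem_pi, Set.mem_univ, true_implies]
  rw [hset]; exact h0

lemma prod_phi_bound (d k : ℕ) (M : Finset (Fin d)) {u : Fin d → ℝ}
    (hu : ∀ i, u i ∈ Set.Icc (0:ℝ) 1) :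
    |∏ m ∈ M, phiFGM k (u m)| ≤ (Real.sqrt 3 + Real.sqrt 5) ^ M.card := by
  rw [Finset.abs_prod, ← Finset.prod_const]
  exact Finset.prod_le_prod (fun m _ => abs_nonneg _) (fun m _ => phi_bound' k (hu m))

lemma prod_phi_bound_tight (d k : ℕ) (M : Finset (Fin d)) {u : Fin d → ℝ}
    (hu : ∀ i, u i ∈ Set.Icc (0:ℝ) 1) :
    |∏ m ∈ M, phiFGM k (u m)| ≤ (if k = 1 then Real.sqrt 3 else Real.sqrt 5) ^ M.card := by
  rw [Finset.abs_prod, ← Finset.prod_const]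
  exact Finset.prod_le_prod (fun m _ => abs_nonneg _) (fun m _ => phi_bound k (hu m))

lemma meas_prod_phi (d k : ℕ) (M : Finset (Fin d)) :
    Continuous fun u : Fin d → ℝ => ∏ m ∈ M, phiFGM k (u m) :=
  continuous_finset_prod _ fun m _ => (phi_cont k).comp (continuous_apply m)

lemma integ2 (d k z : ℕ) (M P : Finset (Fin d)) :
    Integrable (fun u => (∏ m ∈ M, phiFGM k (u m)) * ∏ s ∈ P, phiFGM z (u s)) (piM d) := by
  refine Integrable.mono' (integrable_const
      ((Real.sqrt 3 + Real.sqrt 5) ^ M.card * (Real.sqrt 3 + Real.sqrt 5) ^ P.card))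
    (((meas_prod_phi d k M).mul (meas_prod_phi d z P)).aestronglyMeasurable) ?_
  filter_upwards [ae_cube d] with u hu
  have h1 := prod_phi_bound d k M hu
  have h2 := prod_phi_bound d z P hu
  rw [norm_mul, Real.norm_eq_abs, Real.norm_eq_abs]
  exact mul_le_mul h1 h2 (abs_nonneg _) (le_trans (abs_nonneg _) h1)

lemma core (d k z : ℕ) (M P : Finset (Fin d)) (hPne : P.Nonempty) :
    ∫ u, (∏ m ∈ M, phiFGM k (u m)) * ∏ s ∈ P, phiFGM z (u s) ∂(piM d) =
      if M = P ∧ (k = 1 ↔ z = 1) then 1 else 0 := by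
  classical
  have hrw : (fun u : Fin d → ℝ => (∏ m ∈ M, phiFGM k (u m)) * ∏ s ∈ P, phiFGM z (u s))
      = fun u => ∏ i : Fin d,
        ((if i ∈ M then phiFGM k (u i) else 1) * (if i ∈ P then phiFGM z (u i) else 1)) := by
    funext u
    rw [Finset.prod_mul_distrib]
    congr 1 <;> rw [Finset.prod_ite_mem, Finset.univ_inter]
  rw [hrw, FGMaux.pi_integral (fun _ => mu0)
    (fun i x => (if i ∈ M then phiFGM k x else 1) * (if i ∈ P then phiFGM z x else 1))]
  have hfac : ∀ i : Fin d,
      (∫ x, (if i ∈ M then phiFGM k x else 1) * (if i ∈ P then phiFGM z x else 1) ∂mu0)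
      = if i ∈ M then (if i ∈ P then (if (k = 1 ↔ z = 1) then (1:ℝ) else 0) else 0)
        else (if i ∈ P then 0 else 1) := by
    intro i
    by_cases hiM : i ∈ M <;> by_cases hiP : i ∈ P <;>
      simp only [hiM, hiP, if_true, if_false, mul_one, one_mul]
    · exact I_mul k z
    · exact I_one k
    · exact I_one z
    · simp
  simp_rw [hfac]
  by_cases hMP : M = P
  · subst hMP
    by_cases hkz : (k = 1 ↔ z = 1)
    · simp only [hkz, if_true, and_true, if_pos rfl]
      exact Finset.prod_eq_one fun i _ => by by_cases h : i ∈ M <;> simp [h]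
    · simp only [hkz, if_false, and_false]
      obtain ⟨i, hi⟩ := hPne
      exact Finset.prod_eq_zero (Finset.mem_univ i) (by simp [hi])
  · simp only [hMP, false_and, if_false]
    have : ∃ i, ¬ (i ∈ M ↔ i ∈ P) := by
      by_contra h; push_neg at h
      exact hMP (Finset.ext h)
    obtain ⟨i, hi⟩ := this
    refine Finset.prod_eq_zero (Finset.mem_univ i) ?_
    by_cases hiM : i ∈ M <;> by_cases hiP : i ∈ P <;> simp_all

lemma density_nonneg (d : ℕ) (lam : ℕ → Finset (Fin d) → ℝ) (hlam : fgmAdmissible d lam)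
    {u : Fin d → ℝ} (hu : ∀ i, u i ∈ Set.Icc (0:ℝ) 1) : 0 ≤ fgmDensity d lam u := by
  classical
  rw [fgmDensity]
  set S := Finset.univ.powerset.filter (fun M : Finset (Fin d) => 2 ≤ M.card) with hSdef
  have hIcc : (Finset.Icc 1 2 : Finset ℕ) = {1, 2} := rfl
  have hsum : ∑ k ∈ Finset.Icc 1 2, ∑ M ∈ S, lam k M * ∏ m ∈ M, phiFGM k (u m)
      = ∑ M ∈ S, (lam 1 M * ∏ m ∈ M, phiFGM 1 (u m) + lam 2 M * ∏ m ∈ M, phiFGM 2 (u m)) := by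
    rw [hIcc, Finset.sum_insert (by norm_num), Finset.sum_singleton, ← Finset.sum_add_distrib]
  rw [hsum]
  have habs : |∑ M ∈ S, (lam 1 M * ∏ m ∈ M, phiFGM 1 (u m)
      + lam 2 M * ∏ m ∈ M, phiFGM 2 (u m))| ≤ 1 := by
    refine le_trans (Finset.abs_sum_le_sum_abs _ _) (le_trans (Finset.sum_le_sum ?_) hlam)
    intro M _
    refine le_trans (abs_add_le _ _) ?_
    rw [abs_mul, abs_mul]
    have b1 := prod_phi_bound_tight d 1 M hu
    have b2 := prod_phi_bound_tight d 2 M hu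
    norm_num at b1 b2
    have := mul_le_mul_of_nonneg_left b1 (abs_nonneg (lam 1 M))
    have := mul_le_mul_of_nonneg_left b2 (abs_nonneg (lam 2 M))
    nlinarith [abs_nonneg (lam 1 M), abs_nonneg (lam 2 M)]
  have := neg_abs_le (∑ M ∈ S, (lam 1 M * ∏ m ∈ M, phiFGM 1 (u m)
      + lam 2 M * ∏ m ∈ M, phiFGM 2 (u m)))
  linarith

end FGMaux

theorem stmt_6 (d : ℕ) (hd : 2 ≤ d) (lam : ℕ → Finset (Fin d) → ℝ)
    (hlam : fgmAdmissible d lam) (z : ℕ) (hz : z ∈ ({1, 2} : Set ℕ))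
    (P : Finset (Fin d)) (hP : 2 ≤ P.card) :
    ∫ u, (∏ s ∈ P, phiFGM z (u s)) ∂(fgmMeasure d lam) = lam z P := by
  classical
  have hzz : z = 1 ∨ z = 2 := by simpa using hz
  have hPne : P.Nonempty := Finset.card_pos.1 (by omega)
  have hPnee : (∅ : Finset (Fin d)) ≠ P := fun h => hPne.ne_empty h.symm
  set S := Finset.univ.powerset.filter (fun M : Finset (Fin d) => 2 ≤ M.card) with hSdef
  have hPS : P ∈ S := Finset.mem_filter.2 ⟨Finset.mem_powerset.2 (Finset.subset_univ P), hP⟩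
  have hcont : Continuous (fgmDensity d lam) := by
    unfold fgmDensity
    exact continuous_const.add (continuous_finset_sum _ fun k _ =>
      continuous_finset_sum _ fun M _ => continuous_const.mul (FGMaux.meas_prod_phi d k M))
  rw [show fgmMeasure d lam = (FGMaux.piM d).withDensity
      fun u => (((fgmDensity d lam u).toNNReal : NNReal) : ENNReal) from rfl]
  rw [integral_withDensity_eq_integral_smul hcont.measurable.real_toNNReal]
  have hcongr : (fun u => (fgmDensity d lam u).toNNReal • (∏ s ∈ P, phiFGM z (u s)))
      =ᵐ[FGMaux.piM d] fun u => fgmDensity d lam u * ∏ s ∈ P, phiFGM z (u s) := by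
    filter_upwards [FGMaux.ae_cube d] with u hu
    rw [NNReal.smul_def, Real.coe_toNNReal _ (FGMaux.density_nonneg d lam hlam hu), smul_eq_mul]
  rw [integral_congr_ae hcongr]
  have hexp : ∀ u : Fin d → ℝ, fgmDensity d lam u * ∏ s ∈ P, phiFGM z (u s)
      = (∏ m ∈ (∅ : Finset (Fin d)), phiFGM z (u m)) * ∏ s ∈ P, phiFGM z (u s)
        + ∑ k ∈ Finset.Icc 1 2, ∑ M ∈ S, lam k M *
            ((∏ m ∈ M, phiFGM k (u m)) * ∏ s ∈ P, phiFGM z (u s)) := by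
    intro u
    rw [fgmDensity, add_mul, one_mul, Finset.sum_mul, Finset.prod_empty, one_mul]
    congr 1
    refine Finset.sum_congr rfl fun k _ => ?_
    rw [Finset.sum_mul]
    exact Finset.sum_congr rfl fun M _ => by ring
  simp_rw [hexp]
  rw [integral_add (FGMaux.integ2 d z z ∅ P)
    (integrable_finset_sum _ fun k _ => integrable_finset_sum _ fun M _ =>
      (FGMaux.integ2 d k z M P).const_mul _)]
  rw [integral_finset_sum _ (fun k _ => integrable_finset_sum _ fun M _ =>
    (FGMaux.integ2 d k z M P).const_mul _)]
  rw [FGMaux.core d z z ∅ P hPne, if_neg (fun h => hPnee h.1), zero_add]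
  have hstep : ∀ k ∈ Finset.Icc 1 2,
      (∫ u, ∑ M ∈ S, lam k M * ((∏ m ∈ M, phiFGM k (u m)) * ∏ s ∈ P, phiFGM z (u s))
        ∂(FGMaux.piM d)) = if k = z then lam z P else 0 := by
    intro k hk
    have hk12 : k = 1 ∨ k = 2 := by
      rw [Finset.mem_Icc] at hk; omega
    rw [integral_finset_sum _ (fun M _ => (FGMaux.integ2 d k z M P).const_mul _)]
    simp_rw [MeasureTheory.integral_const_mul]
    have hterm : ∀ M ∈ S, lam k M *
        (∫ u, (∏ m ∈ M, phiFGM k (u m)) * ∏ s ∈ P, phiFGM z (u s) ∂(FGMaux.piM d))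
        = if M = P ∧ k = z then lam k M else 0 := by
      intro M _
      rw [FGMaux.core d k z M P hPne]
      by_cases hMP : M = P
      · subst hMP
        by_cases hkz : k = z
        · subst hkz; simp
        · have hniff : ¬ (k = 1 ↔ z = 1) := by
            intro hiff
            rcases hk12 with h1 | h2
            · rcases hzz with g1 | g2
              · exact hkz (h1.trans g1.symm)
              · exact absurd (hiff.1 h1) (by omega)
            · rcases hzz with g1 | g2
              · exact absurd (hiff.2 g1) (by omega)
              · exact hkz (h2.trans g2.symm)
          simp [hkz, hniff]
      · simp [hMP]
    rw [Finset.sum_congr rfl hterm]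
    by_cases hkz : k = z
    · subst hkz
      simp only [and_true]
      rw [Finset.sum_ite_eq' S P (fun M => lam k M), if_pos hPS]
      simp
    · simp [hkz]
  rw [Finset.sum_congr rfl hstep]
  rw [Finset.sum_ite_eq' (Finset.Icc 1 2) z (fun _ => lam z P)]
  rw [if_pos (Finset.mem_Icc.2 (by omega))]
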